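/- Let n, r, k ∈ ℕ with r ≥ 2, r dividing n, and 1 ≤ k ≤ n/r. Then there exists a graph G on n vertices whose degree sequence d_1 ≤ ⋯ ≤ d_n satisfies d_{n−i(r−1)+1} ≥ n − i for all i ∈ {1, …, n/r} \ {k}, and d_{n−k(r−1)+1} = n − k − 1, but G contains no perfect K_r-packing. -/

import Mathlib

/-- The degree of a vertex. -/
noncomputable def deg {V : Type*} (G : SimpleGraph V) (v : V) : ℕ := Nat.card (G.neighborSet v)

/-- A perfect `K_r`-packing: a collection of vertex-disjoint `r`-cliques covering all vertices. -/
def HasPerfectKrPacking {n : ℕ} (G : SimpleGraph (Fin n)) (r : ℕ) : Prop :=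
  ∃ P : Finset (Finset (Fin n)),
    (∀ p ∈ P, p.card = r ∧ G.IsClique (p : Set (Fin n))) ∧
    (P : Set (Finset (Fin n))).PairwiseDisjoint id ∧
    P.biUnion id = Finset.univ

private lemma card_filter_le_val (n m : ℕ) :
    (Finset.univ.filter (fun y : Fin n => m ≤ (y : ℕ))).card = n - m := by
  have h : (Finset.univ.filter (fun y : Fin n => m ≤ (y : ℕ))).map Fin.valEmbedding
      = Finset.Ico m n := by
    ext x
    simp only [Finset.mem_map, Finset.mem_filter, Finset.mem_univ, true_and, Finset.mem_Ico,
      Fin.valEmbedding_apply]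
    constructor
    · rintro ⟨y, hy, rfl⟩; exact ⟨hy, y.isLt⟩
    · rintro ⟨h1, h2⟩; exact ⟨⟨x, h2⟩, h1, rfl⟩
  rw [← Finset.card_map Fin.valEmbedding, h, Nat.card_Ico]

private lemma card_filter_lt_val (n m : ℕ) :
    (Finset.univ.filter (fun y : Fin n => (y : ℕ) < m)).card = min m n := by
  have h : (Finset.univ.filter (fun y : Fin n => (y : ℕ) < m)).map Fin.valEmbedding
      = Finset.range (min m n) := by
    ext x
    simp only [Finset.mem_map, Finset.mem_filter, Finset.mem_univ, true_and, Finset.mem_range,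
      Fin.valEmbedding_apply, lt_min_iff]
    constructor
    · rintro ⟨y, hy, rfl⟩; exact ⟨hy, y.isLt⟩
    · rintro ⟨h1, h2⟩; exact ⟨⟨x, h2⟩, h1, rfl⟩
  rw [← Finset.card_map Fin.valEmbedding, h, Finset.card_range]

/-- The extremal graph: vertices `< k` are adjacent exactly to vertices `≥ m`;
vertices in `[k, n)` are adjacent to everything except the vertices `< k`
(which are adjacent only if the other endpoint is `≥ m`). -/
private def myG (n k m : ℕ) : SimpleGraph (Fin n) where
  Adj x y := x ≠ y ∧ ((x : ℕ) < k → m ≤ (y : ℕ)) ∧ ((y : ℕ) < k → m ≤ (x : ℕ))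
  symm := ⟨fun x y ⟨h1, h2, h3⟩ => ⟨h1.symm, h3, h2⟩⟩
  loopless := ⟨fun x h => h.1 rfl⟩

private lemma myG_adj (n k m : ℕ) (x y : Fin n) :
    (myG n k m).Adj x y ↔
      x ≠ y ∧ ((x : ℕ) < k → m ≤ (y : ℕ)) ∧ ((y : ℕ) < k → m ≤ (x : ℕ)) := Iff.rfl

private lemma myG_deg (n k m : ℕ) (hkm : k + 1 ≤ m) (hmn : m ≤ n) (v : Fin n) :
    deg (myG n k m) v =
      if (v : ℕ) < k then n - m else if (v : ℕ) < m then n - k - 1 else n - 1 := by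
  classical
  rcases lt_or_ge (v : ℕ) k with hv | hv
  · have hset : (myG n k m).neighborSet v
        = ↑(Finset.univ.filter (fun y : Fin n => m ≤ (y : ℕ))) := by
      ext y
      simp only [SimpleGraph.mem_neighborSet, myG_adj, Finset.coe_filter, Set.mem_setOf_eq,
        Finset.mem_univ, true_and]
      constructor
      · rintro ⟨-, h2, -⟩; exact h2 hv
      · intro hy
        refine ⟨Fin.ne_of_val_ne (by omega), fun _ => hy, fun h => absurd h (by omega)⟩
    rw [deg, hset, Nat.card_coe_set_eq, Set.ncard_coe_finset, card_filter_le_val,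
      if_pos hv]
  · rcases lt_or_ge (v : ℕ) m with hv2 | hv2
    · have hvmem : v ∈ Finset.univ.filter (fun y : Fin n => k ≤ (y : ℕ)) := by
        simp [hv]
      have hset : (myG n k m).neighborSet v
          = ↑((Finset.univ.filter (fun y : Fin n => k ≤ (y : ℕ))).erase v) := by
        ext y
        simp only [SimpleGraph.mem_neighborSet, myG_adj, Finset.coe_erase, Set.mem_diff,
          Finset.coe_filter, Set.mem_setOf_eq, Finset.mem_univ, true_and,
          Set.mem_singleton_iff]
        constructor
        · rintro ⟨h1, -, h3⟩
          refine ⟨?_, fun h => h1.symm h⟩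
          by_contra h
          exact absurd (h3 (by omega)) (by omega)
        · rintro ⟨hy, hne⟩
          exact ⟨fun h => hne h.symm, fun h => absurd h (by omega), fun h => absurd h (by omega)⟩
      rw [deg, hset, Nat.card_coe_set_eq, Set.ncard_coe_finset,
        Finset.card_erase_of_mem hvmem, card_filter_le_val, if_neg (by omega), if_pos hv2]
    · have hset : (myG n k m).neighborSet v = ↑(Finset.univ.erase v) := by
        ext y
        simp only [SimpleGraph.mem_neighborSet, myG_adj, Finset.coe_erase, Set.mem_diff,
          Finset.coe_univ, Set.mem_univ, true_and, Set.mem_singleton_iff]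
        constructor
        · rintro ⟨h1, -, -⟩; exact fun h => h1.symm h
        · intro hne
          exact ⟨fun h => hne h.symm, fun h => absurd h (by omega), fun _ => by omega⟩
      rw [deg, hset, Nat.card_coe_set_eq, Set.ncard_coe_finset,
        Finset.card_erase_of_mem (Finset.mem_univ v), Finset.card_univ, Fintype.card_fin,
        if_neg (by omega), if_neg (by omega)]

theorem stmt12 (n r k : ℕ) (hr : 2 ≤ r) (hdvd : r ∣ n) (hk1 : 1 ≤ k) (hk2 : k ≤ n / r) :
    ∃ (G : SimpleGraph (Fin n)) (d : Fin n → ℕ) (σ : Equiv.Perm (Fin n)),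
      Monotone d ∧ (∀ i, d i = deg G (σ i)) ∧
      (∀ i : ℕ, 1 ≤ i → i ≤ n / r → i ≠ k →
        ∀ j : Fin n, (j : ℕ) = n - i * (r - 1) → n - i ≤ d j) ∧
      (∀ j : Fin n, (j : ℕ) = n - k * (r - 1) → d j = n - k - 1) ∧
      ¬ HasPerfectKrPacking G r := by
  classical
  obtain ⟨e, he⟩ := hdvd
  have hne : n / r = e := by rw [he]; exact Nat.mul_div_cancel_left e (by omega)
  have hkr : k * r ≤ n := Nat.le_div_iff_mul_le (by omega) |>.1 hk2
  set c := k * (r - 1) with hc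
  have hck : c + k = k * r := by
    have h : r - 1 + 1 = r := by omega
    calc c + k = k * (r - 1 + 1) := by rw [hc, Nat.mul_add, Nat.mul_one]
    _ = k * r := by rw [h]
  have hc1 : 1 ≤ c := by
    calc 1 = 1 * 1 := by ring
    _ ≤ k * (r - 1) := Nat.mul_le_mul hk1 (by omega)
  have hcn : c + k ≤ n := hck ▸ hkr
  set m := n - c + 1 with hm
  have hkm : k + 1 ≤ m := by omega
  have hmn : m ≤ n := by omega
  refine ⟨myG n k m,
    fun i => if (i : ℕ) < k then n - m else if (i : ℕ) < m then n - k - 1 else n - 1,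
    Equiv.refl _, ?_, ?_, ?_, ?_, ?_⟩
  · -- Monotone
    intro i j hij
    have hij' : (i : ℕ) ≤ (j : ℕ) := hij
    simp only
    split_ifs <;> omega
  · -- degrees
    intro i
    rw [Equiv.refl_apply, myG_deg n k m hkm hmn]
  · -- condition for i ≠ k
    intro i hi1 hi2 hik j hj
    have hie : i ≤ e := hne ▸ hi2
    rcases lt_or_gt_of_ne hik with hlt | hgt
    · -- i < k : j lands in the top part, degree n - 1
      have hmul : i * (r - 1) + (r - 1) ≤ c := by
        rw [hc, ← Nat.succ_mul]
        exact Nat.mul_le_mul_right _ (by omega)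
      have hjm : m ≤ (j : ℕ) := by omega
      simp only [if_neg (by omega : ¬ (j : ℕ) < k), if_neg (by omega : ¬ (j : ℕ) < m)]
      omega
    · -- i > k : j lands in the middle part, degree n - k - 1
      have hmul1 : c ≤ i * (r - 1) := Nat.mul_le_mul_right _ (by omega)
      have hmul2 : i * (r - 1) ≤ e * (r - 1) := Nat.mul_le_mul_right _ hie
      have hmul3 : e * (r - 1) + e = n := by
        have h : r - 1 + 1 = r := by omega
        calc e * (r - 1) + e = e * (r - 1 + 1) := by rw [Nat.mul_add, Nat.mul_one]
        _ = e * r := by rw [h]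
        _ = n := by rw [he, Nat.mul_comm]
      have hke : k ≤ e := hne ▸ hk2
      have hjk : ¬ (j : ℕ) < k := by omega
      have hjm : (j : ℕ) < m := by omega
      simp only [if_neg hjk, if_pos hjm]
      omega
  · -- exact value at n - k(r-1)
    intro j hj
    have h1 : ¬ (j : ℕ) < k := by omega
    have h2 : (j : ℕ) < m := by omega
    simp only [if_neg h1, if_pos h2]
  · -- no perfect packing
    rintro ⟨P, hP, hdisj, hcover⟩
    set A : Finset (Fin n) := Finset.univ.filter (fun y : Fin n => m ≤ (y : ℕ)) with hA
    set Lf : Finset (Fin n) := Finset.univ.filter (fun y : Fin n => (y : ℕ) < k) with hLf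
    have hAcard : A.card = c - 1 := by
      rw [hA, card_filter_le_val]; omega
    have hLcard : Lf.card = k := by
      rw [hLf, card_filter_lt_val]; omega
    have hcov : ∀ x : Fin n, ∃ p ∈ P, x ∈ p := by
      intro x
      have : x ∈ P.biUnion id := hcover ▸ Finset.mem_univ x
      simpa using this
    have hdisj' : ∀ p ∈ P, ∀ q ∈ P, p ≠ q → ∀ (s : Finset (Fin n)),
        Disjoint (p ∩ s) (q ∩ s) := by
      intro p hp q hq hpq s
      exact (hdisj (Finset.mem_coe.2 hp) (Finset.mem_coe.2 hq) hpq).mono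
        Finset.inter_subset_left Finset.inter_subset_left
    have hsum : ∀ s : Finset (Fin n), ∑ p ∈ P, (p ∩ s).card = s.card := by
      intro s
      have hbu : P.biUnion (fun p => p ∩ s) = s := by
        ext x
        simp only [Finset.mem_biUnion, Finset.mem_inter]
        constructor
        · rintro ⟨p, -, -, hx⟩; exact hx
        · intro hx
          obtain ⟨p, hp, hxp⟩ := hcov x
          exact ⟨p, hp, hxp, hx⟩
      calc ∑ p ∈ P, (p ∩ s).card
          = (P.biUnion fun p => p ∩ s).card :=
            (Finset.card_biUnion (fun p hp q hq hpq => hdisj' p hp q hq hpq s)).symm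
      _ = s.card := by rw [hbu]
    -- each clique contains at most one low vertex
    have hle1 : ∀ p ∈ P, (p ∩ Lf).card ≤ 1 := by
      intro p hp
      by_contra h
      obtain ⟨x, hx, y, hy, hxy⟩ := Finset.one_lt_card.1 (show 1 < (p ∩ Lf).card by omega)
      simp only [Finset.mem_inter, hLf, Finset.mem_filter, Finset.mem_univ, true_and] at hx hy
      have hadj := (hP p hp).2 (Finset.mem_coe.2 hx.1) (Finset.mem_coe.2 hy.1) hxy
      rw [myG_adj] at hadj
      have := hadj.2.1 hx.2
      omega
    set Q : Finset (Finset (Fin n)) := P.filter (fun p => (p ∩ Lf).Nonempty) with hQ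
    have hQk : k ≤ Q.card := by
      have h1 : ∑ p ∈ P, (p ∩ Lf).card ≤ ∑ p ∈ P, (if (p ∩ Lf).Nonempty then 1 else 0) := by
        refine Finset.sum_le_sum fun p hp => ?_
        by_cases hne' : (p ∩ Lf).Nonempty
        · rw [if_pos hne']; exact hle1 p hp
        · rw [Finset.not_nonempty_iff_eq_empty] at hne'
          simp [hne']
      rw [hsum Lf, hLcard] at h1
      rwa [← Finset.card_filter] at h1
    have hQA : ∀ p ∈ Q, r - 1 ≤ (p ∩ A).card := by
      intro p hpQ
      rw [hQ, Finset.mem_filter] at hpQ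
      obtain ⟨hp, x, hx⟩ := hpQ
      simp only [Finset.mem_inter, hLf, Finset.mem_filter, Finset.mem_univ, true_and] at hx
      have hsub : p.erase x ⊆ p ∩ A := by
        intro y hy
        have hyx := Finset.ne_of_mem_erase hy
        have hyp := Finset.mem_of_mem_erase hy
        have hadj := (hP p hp).2 (Finset.mem_coe.2 hx.1) (Finset.mem_coe.2 hyp) (Ne.symm hyx)
        rw [myG_adj] at hadj
        have hmy := hadj.2.1 hx.2
        simp only [Finset.mem_inter, hA, Finset.mem_filter, Finset.mem_univ, true_and]
        exact ⟨hyp, hmy⟩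
      have := Finset.card_le_card hsub
      rw [Finset.card_erase_of_mem hx.1, (hP p hp).1] at this
      exact this
    have hchain : Q.card * (r - 1) ≤ c - 1 := by
      calc Q.card * (r - 1) = ∑ _p ∈ Q, (r - 1) := by rw [Finset.sum_const, smul_eq_mul]
      _ ≤ ∑ p ∈ Q, (p ∩ A).card := Finset.sum_le_sum hQA
      _ ≤ ∑ p ∈ P, (p ∩ A).card := Finset.sum_le_sum_of_subset (Finset.filter_subset _ _)
      _ = A.card := hsum A
      _ = c - 1 := hAcard
    have : k * (r - 1) ≤ Q.card * (r - 1) := Nat.mul_le_mul_right _ hQk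
    omega
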